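/- In the avg-EQ reduction instance built from a simple graph H = (V, E) and an integer k ≥ 4 with |V| + |E| ≥ k², under avg-EQ utilities, the following holds: if a coalition C blocks the coalition structure Γ, then every player of C is a vertex player v', an edge player e', an incidence player b_{v,e}, or a mid player of a vertex gadget P_v; in particular, C contains no base-clique players of any gadget and no mid players of edge or incidence gadgets. -/

import Mathlib

open Finset
open scoped Classical

section AHGDefs

variable {N : Type*} [Fintype N] [DecidableEq N]

/-- The set of friends of player `i` inside coalition `C`. -/
noncomputable def friendsIn (G : SimpleGraph N) (C : Finset N) (i : N) : Finset N :=
  C.filter fun j => G.Adj i j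

/-- The friend-oriented valuation of coalition `C` by player `i`:
`val_i(C) = n·|F_i ∩ C| − |E_i ∩ C|`. -/
noncomputable def fval (G : SimpleGraph N) (C : Finset N) (i : N) : ℤ :=
  (Fintype.card N : ℤ) * ((friendsIn G C i).card : ℤ)
    - ((C.filter fun j => ¬ G.Adj i j ∧ j ≠ i).card : ℤ)

/-- Average-based equal-treatment utility. -/
noncomputable def utilAvgEQ (G : SimpleGraph N) (C : Finset N) (i : N) : ℚ :=
  (∑ c ∈ insert i (friendsIn G C i), (fval G C c : ℚ)) /
    ((insert i (friendsIn G C i)).card : ℚ)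

/-- Average-based altruistic-treatment utility with weight `w`. -/
noncomputable def utilAvgAL (G : SimpleGraph N) (w : ℚ) (C : Finset N) (i : N) : ℚ :=
  (fval G C i : ℚ) +
    w * (if (friendsIn G C i).Nonempty then
          (∑ c ∈ friendsIn G C i, (fval G C c : ℚ)) / ((friendsIn G C i).card : ℚ)
         else 0)

/-- Min-based equal-treatment utility. -/
noncomputable def utilMinEQ (G : SimpleGraph N) (C : Finset N) (i : N) : ℤ :=
  (insert i (friendsIn G C i)).inf' (insert_nonempty _ _) (fval G C)

/-- Min-based altruistic-treatment utility with weight `w`. -/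
noncomputable def utilMinAL (G : SimpleGraph N) (w : ℤ) (C : Finset N) (i : N) : ℤ :=
  fval G C i +
    w * (if h : (friendsIn G C i).Nonempty then (friendsIn G C i).inf' h (fval G C) else 0)

/-- A coalition structure (partition of the players), given as the map sending
each player to its coalition. -/
structure CoalitionStructure (N : Type*) [Fintype N] [DecidableEq N] where
  part : N → Finset N
  mem_part : ∀ i, i ∈ part i
  part_eq : ∀ i j, j ∈ part i → part j = part i

/-- A (nonempty) coalition `C` blocks the coalition structure `Γ`. -/
def Blocks {α : Type*} [LT α] (util : Finset N → N → α) (Γ : CoalitionStructure N)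
    (C : Finset N) : Prop :=
  C.Nonempty ∧ ∀ i ∈ C, util (Γ.part i) i < util C i

/-- Core stability: no nonempty coalition blocks `Γ`. -/
def CoreStable {α : Type*} [LT α] (util : Finset N → N → α)
    (Γ : CoalitionStructure N) : Prop :=
  ¬ ∃ C : Finset N, Blocks util Γ C

/-- The base clique of a `(d,k')`-dome gadget on `P` with top player `top`
and mid players `mid`. -/
noncomputable def domeBase {d : ℕ} (P : Finset N) (top : N) (mid : Fin d → N) : Finset N :=
  P \ insert top (Finset.univ.image mid)

/-- `P` carries a `(d,k')`-dome gadget of the graph `G`, with top player `top`,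
mid players `mid i` and fringe players `fringe i`. -/
structure IsDomeGadget (G : SimpleGraph N) (d k' : ℕ) (P : Finset N) (top : N)
    (mid fringe : Fin d → N) : Prop where
  card_eq : P.card = k'
  top_mem : top ∈ P
  mid_mem : ∀ i, mid i ∈ P
  mid_inj : Function.Injective mid
  mid_ne_top : ∀ i, mid i ≠ top
  fringe_mem : ∀ i, fringe i ∈ domeBase P top mid
  fringe_inj : Function.Injective fringe
  adj_iff : ∀ x ∈ P, ∀ y ∈ P, (G.Adj x y ↔
    ((x = top ∧ ∃ i, y = mid i) ∨ (y = top ∧ ∃ i, x = mid i) ∨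
     (x ∈ domeBase P top mid ∧ y ∈ domeBase P top mid ∧ x ≠ y) ∨
     (∃ i, (x = mid i ∧ y = fringe i) ∨ (y = mid i ∧ x = fringe i))))

/-- `P` carries a `(d,k')`-dome gadget with top player `top` (mid and fringe
players existentially quantified). -/
def HasDomeGadget (G : SimpleGraph N) (d k' : ℕ) (P : Finset N) (top : N) : Prop :=
  ∃ mid fringe : Fin d → N, IsDomeGadget G d k' P top mid fringe

/-- The gadget size `k' = k + 3·(k choose 2) + 1` of the average-based reductions. -/
def avgK' (k : ℕ) : ℕ := k + 3 * Nat.choose k 2 + 1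

variable {V : Type*} [Fintype V] [DecidableEq V]

/-- `Γ` is the coalition structure of the average-based reduction instances: its
coalitions are exactly the gadget player sets. -/
def IsAvgGamma (H : SimpleGraph V) (Pv : V → Finset N) (Pe : Sym2 V → Finset N)
    (Pve : V → Sym2 V → Finset N) (Γ : CoalitionStructure N) : Prop :=
  (∀ v : V, ∀ i ∈ Pv v, Γ.part i = Pv v) ∧
  (∀ e ∈ H.edgeSet, ∀ i ∈ Pe e, Γ.part i = Pe e) ∧
  (∀ (v : V), ∀ e ∈ H.edgeSet, v ∈ e → ∀ i ∈ Pve v e, Γ.part i = Pve v e)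

/-- The avg-EQ reduction instance built from the graph `H` and `k ≥ 4`:
`G` is the constructed network of friends; `Pv v` carries a `(k−1,k')`-dome gadget
with top player `vp v`, `Pe e` a `(2,k')`-dome gadget with top player `ep e`, and
`Pve v e` a `(2,k')`-dome gadget with top player `bp v e`. Each `bp v e` is further
adjacent to `vp v` and `ep e`, and there are no other edges. -/
structure AvgEQReduction (H : SimpleGraph V) (k : ℕ) (G : SimpleGraph N)
    (Pv : V → Finset N) (Pe : Sym2 V → Finset N) (Pve : V → Sym2 V → Finset N)
    (vp : V → N) (ep : Sym2 V → N) (bp : V → Sym2 V → N) : Prop where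
  dome_v : ∀ v : V, HasDomeGadget G (k - 1) (avgK' k) (Pv v) (vp v)
  dome_e : ∀ e ∈ H.edgeSet, HasDomeGadget G 2 (avgK' k) (Pe e) (ep e)
  dome_ve : ∀ (v : V), ∀ e ∈ H.edgeSet, v ∈ e →
    HasDomeGadget G 2 (avgK' k) (Pve v e) (bp v e)
  disj_vv : ∀ v w : V, v ≠ w → Disjoint (Pv v) (Pv w)
  disj_ee : ∀ e ∈ H.edgeSet, ∀ f ∈ H.edgeSet, e ≠ f → Disjoint (Pe e) (Pe f)
  disj_bb : ∀ (v : V), ∀ e ∈ H.edgeSet, v ∈ e → ∀ (w : V), ∀ f ∈ H.edgeSet, w ∈ f →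
    (v, e) ≠ (w, f) → Disjoint (Pve v e) (Pve w f)
  disj_v_e : ∀ (v : V), ∀ e ∈ H.edgeSet, Disjoint (Pv v) (Pe e)
  disj_v_b : ∀ (v w : V), ∀ f ∈ H.edgeSet, w ∈ f → Disjoint (Pv v) (Pve w f)
  disj_e_b : ∀ e ∈ H.edgeSet, ∀ (w : V), ∀ f ∈ H.edgeSet, w ∈ f →
    Disjoint (Pe e) (Pve w f)
  cover : ∀ x : N, (∃ v : V, x ∈ Pv v) ∨ (∃ e ∈ H.edgeSet, x ∈ Pe e) ∨
    (∃ (v : V), ∃ e ∈ H.edgeSet, v ∈ e ∧ x ∈ Pve v e)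
  adj_bv : ∀ (v : V), ∀ e ∈ H.edgeSet, v ∈ e → G.Adj (bp v e) (vp v)
  adj_be : ∀ (v : V), ∀ e ∈ H.edgeSet, v ∈ e → G.Adj (bp v e) (ep e)
  adj_cases : ∀ x y : N, G.Adj x y →
    (∃ v : V, x ∈ Pv v ∧ y ∈ Pv v) ∨
    (∃ e ∈ H.edgeSet, x ∈ Pe e ∧ y ∈ Pe e) ∨
    (∃ (v : V), ∃ e ∈ H.edgeSet, v ∈ e ∧ x ∈ Pve v e ∧ y ∈ Pve v e) ∨
    (∃ (v : V), ∃ e ∈ H.edgeSet, v ∈ e ∧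
      ((x = bp v e ∧ y = vp v) ∨ (y = bp v e ∧ x = vp v))) ∨
    (∃ (v : V), ∃ e ∈ H.edgeSet, v ∈ e ∧
      ((x = bp v e ∧ y = ep e) ∨ (y = bp v e ∧ x = ep e)))
end AHGDefs


section Helpers
set_option linter.unusedSectionVars false
variable {N : Type*} [Fintype N] [DecidableEq N]

lemma mem_friendsIn {G : SimpleGraph N} {C : Finset N} {i j : N} :
    j ∈ friendsIn G C i ↔ j ∈ C ∧ G.Adj i j := by
  simp [friendsIn]

lemma fval_le (G : SimpleGraph N) (S : Finset N) (c : N) :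
    fval G S c ≤ (Fintype.card N : ℤ) * ((friendsIn G S c).card : ℤ) := by
  unfold fval
  have : (0:ℤ) ≤ ((S.filter fun j => ¬ G.Adj c j ∧ j ≠ c).card : ℤ) := by positivity
  linarith

lemma fval_ge (G : SimpleGraph N) (S : Finset N) (c : N) :
    (Fintype.card N : ℤ) * ((friendsIn G S c).card : ℤ) - (S.card : ℤ) ≤ fval G S c := by
  unfold fval
  have h : (S.filter fun j => ¬ G.Adj c j ∧ j ≠ c).card ≤ S.card :=
    Finset.card_le_card (Finset.filter_subset _ _)
  have h' : ((S.filter fun j => ¬ G.Adj c j ∧ j ≠ c).card : ℤ) ≤ (S.card : ℤ) := by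
    exact_mod_cast h
  linarith

lemma card_split {G : SimpleGraph N} {S : Finset N} {c : N} (hc : c ∈ S) :
    S.card = (friendsIn G S c).card + (S.filter fun j => ¬ G.Adj c j ∧ j ≠ c).card + 1 := by
  have h1 : (S.filter fun j => G.Adj c j).card + (S.filter fun j => ¬ G.Adj c j).card
      = S.card := Finset.card_filter_add_card_filter_not _
  have h2 : (S.filter fun j => ¬ G.Adj c j)
      = insert c (S.filter fun j => ¬ G.Adj c j ∧ j ≠ c) := by
    ext j
    simp only [Finset.mem_filter, Finset.mem_insert]
    constructor
    · rintro ⟨hj, hna⟩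
      by_cases hjc : j = c
      · exact Or.inl hjc
      · exact Or.inr ⟨hj, hna, hjc⟩
    · rintro (rfl | ⟨hj, hna, hne⟩)
      · exact ⟨hc, fun h => (G.irrefl h)⟩
      · exact ⟨hj, hna⟩
  have h3 : c ∉ (S.filter fun j => ¬ G.Adj c j ∧ j ≠ c) := by simp
  rw [h2, Finset.card_insert_of_notMem h3] at h1
  unfold friendsIn
  omega

lemma fval_eq_of_mem {G : SimpleGraph N} {S : Finset N} {c : N} (hc : c ∈ S) :
    fval G S c = ((Fintype.card N : ℤ) + 1) * ((friendsIn G S c).card : ℤ)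
      - ((S.card : ℤ) - 1) := by
  have h := card_split (G := G) hc
  have h' : ((S.filter fun j => ¬ G.Adj c j ∧ j ≠ c).card : ℤ)
      = (S.card : ℤ) - ((friendsIn G S c).card : ℤ) - 1 := by
    push_cast [h]; ring
  unfold fval
  rw [h']; ring

lemma group_card_pos (G : SimpleGraph N) (C : Finset N) (i : N) :
    (0:ℚ) < ((insert i (friendsIn G C i)).card : ℚ) := by
  exact_mod_cast Finset.card_pos.2 (Finset.insert_nonempty _ _)

lemma utilAvgEQ_le {G : SimpleGraph N} {C : Finset N} {i : N} {M : ℚ}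
    (h : ∀ c ∈ insert i (friendsIn G C i), (fval G C c : ℚ) ≤ M) :
    utilAvgEQ G C i ≤ M := by
  rw [utilAvgEQ, div_le_iff₀ (group_card_pos G C i)]
  calc ∑ c ∈ insert i (friendsIn G C i), (fval G C c : ℚ)
      ≤ (insert i (friendsIn G C i)).card • M := Finset.sum_le_card_nsmul _ _ _ h
    _ = M * ((insert i (friendsIn G C i)).card : ℚ) := by
        rw [nsmul_eq_mul]; ring

lemma le_utilAvgEQ {G : SimpleGraph N} {C : Finset N} {i : N} {M : ℚ}
    (h : ∀ c ∈ insert i (friendsIn G C i), M ≤ (fval G C c : ℚ)) :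
    M ≤ utilAvgEQ G C i := by
  rw [utilAvgEQ, le_div_iff₀ (group_card_pos G C i)]
  calc M * ((insert i (friendsIn G C i)).card : ℚ)
      = (insert i (friendsIn G C i)).card • M := by rw [nsmul_eq_mul]; ring
    _ ≤ _ := Finset.card_nsmul_le_sum _ _ _ h

lemma sum_lt_of_util_lt {G : SimpleGraph N} {P C : Finset N} {i : N}
    (hgroup : insert i (friendsIn G C i) = insert i (friendsIn G P i))
    (h : utilAvgEQ G P i < utilAvgEQ G C i) :
    ∑ c ∈ insert i (friendsIn G P i), (fval G P c : ℚ)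
      < ∑ c ∈ insert i (friendsIn G P i), (fval G C c : ℚ) := by
  rw [utilAvgEQ, utilAvgEQ, hgroup, div_lt_div_iff₀ (group_card_pos G P i)
    (group_card_pos G P i)] at h
  have hpos := group_card_pos G P i
  exact lt_of_mul_lt_mul_right (by linarith [h]) (le_of_lt hpos)


lemma avgK'_facts (k : ℕ) (hk : 4 ≤ k) :
    4 * k + 1 ≤ avgK' k ∧ 2 * avgK' k ≤ 4 * (k * k) := by
  obtain ⟨j, rfl⟩ := Nat.exists_eq_add_of_le hk
  have hev : Even ((4 + j) * (4 + j - 1)) := by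
    have h := Nat.even_mul_succ_self (4 + j - 1)
    have h1 : 4 + j - 1 + 1 = 4 + j := by omega
    rw [h1] at h
    rwa [mul_comm]
  have hch2 : 2 * Nat.choose (4 + j) 2 = (4 + j) * (4 + j - 1) := by
    rw [Nat.choose_two_right, Nat.mul_div_cancel' hev.two_dvd]
  have h31 : 4 + j - 1 = 3 + j := by omega
  rw [h31] at hch2
  unfold avgK'
  constructor
  · nlinarith [hch2]
  · nlinarith [hch2]

section Gadget
variable {G : SimpleGraph N} {d k' : ℕ} {P : Finset N} {top : N} {mid fringe : Fin d → N}

lemma top_not_mem_base : top ∉ domeBase P top mid := by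
  simp [domeBase]

lemma mid_not_mem_base (i : Fin d) : mid i ∉ domeBase P top mid := by
  simp only [domeBase, Finset.mem_sdiff, Finset.mem_insert, not_and, not_not]
  intro _
  exact Or.inr (Finset.mem_image.2 ⟨i, Finset.mem_univ i, rfl⟩)

lemma base_subset : domeBase P top mid ⊆ P := Finset.sdiff_subset

variable (hg : IsDomeGadget G d k' P top mid fringe)
include hg

lemma fringe_ne_top (i : Fin d) : fringe i ≠ top := by
  intro h
  exact top_not_mem_base (h ▸ hg.fringe_mem i)

lemma fringe_ne_mid (i j : Fin d) : fringe i ≠ mid j := by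
  intro h
  exact mid_not_mem_base j (h ▸ hg.fringe_mem i)

lemma card_base : (domeBase P top mid).card + d + 1 = k' := by
  have hsub : insert top (Finset.univ.image mid) ⊆ P := by
    intro x hx
    rcases Finset.mem_insert.1 hx with rfl | hx
    · exact hg.top_mem
    · rcases Finset.mem_image.1 hx with ⟨i, _, rfl⟩
      exact hg.mid_mem i
  have hcardi : (insert top (Finset.univ.image mid)).card = d + 1 := by
    rw [Finset.card_insert_of_notMem, Finset.card_image_of_injective _ hg.mid_inj,
      Finset.card_univ, Fintype.card_fin]
    intro h
    rcases Finset.mem_image.1 h with ⟨i, _, hi⟩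
    exact hg.mid_ne_top i hi
  have h1 : (domeBase P top mid).card = P.card - (d+1) := by
    rw [domeBase, Finset.card_sdiff_of_subset hsub, hcardi]
  have h2 : d + 1 ≤ P.card := by
    rw [← hcardi]; exact Finset.card_le_card hsub
  rw [h1, hg.card_eq]
  rw [hg.card_eq] at h2
  omega

variable (hcl : ∀ x ∈ P, x ≠ top → ∀ y, G.Adj x y → y ∈ P)
include hcl

lemma adj_mid_iff (i : Fin d) (y : N) :
    G.Adj (mid i) y ↔ y = top ∨ y = fringe i := by
  constructor
  · intro h
    have hyP : y ∈ P := hcl _ (hg.mid_mem i) (hg.mid_ne_top i) y h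
    rcases (hg.adj_iff _ (hg.mid_mem i) _ hyP).1 h with
      ⟨h1, _⟩ | ⟨h1, _⟩ | ⟨h1, _, _⟩ | ⟨j, ⟨h1, h2⟩ | ⟨h1, h2⟩⟩
    · exact absurd h1 (hg.mid_ne_top i)
    · exact Or.inl h1
    · exact absurd h1 (mid_not_mem_base i)
    · exact Or.inr (by rw [h2, hg.mid_inj h1])
    · exact absurd h2.symm (fringe_ne_mid hg j i)
  · rintro (rfl | rfl)
    · exact (hg.adj_iff _ (hg.mid_mem i) _ hg.top_mem).2 (Or.inr (Or.inl ⟨rfl, i, rfl⟩))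
    · exact (hg.adj_iff _ (hg.mid_mem i) _ (base_subset (hg.fringe_mem i))).2
        (Or.inr (Or.inr (Or.inr ⟨i, Or.inl ⟨rfl, rfl⟩⟩)))

lemma adj_base_nonfringe_iff {x : N} (hx : x ∈ domeBase P top mid)
    (hxf : ∀ i, x ≠ fringe i) (y : N) :
    G.Adj x y ↔ y ∈ (domeBase P top mid).erase x := by
  have hxP : x ∈ P := base_subset hx
  have hxt : x ≠ top := fun h => top_not_mem_base (h ▸ hx)
  constructor
  · intro h
    have hyP : y ∈ P := hcl _ hxP hxt y h
    rcases (hg.adj_iff _ hxP _ hyP).1 h with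
      ⟨h1, _⟩ | ⟨_, j, h2⟩ | ⟨_, h2, h3⟩ | ⟨j, ⟨h1, h2⟩ | ⟨h1, h2⟩⟩
    · exact absurd h1 hxt
    · exact absurd h2 (fun h2 => mid_not_mem_base j (h2 ▸ hx))
    · exact Finset.mem_erase.2 ⟨fun hy => h3 hy.symm, h2⟩
    · exact absurd h1 (fun h1 => mid_not_mem_base j (h1 ▸ hx))
    · exact absurd h2 (hxf j)
  · intro hy
    have hy' := Finset.mem_erase.1 hy
    exact (hg.adj_iff _ hxP _ (base_subset hy'.2)).2
      (Or.inr (Or.inr (Or.inl ⟨hx, hy'.2, fun h => hy'.1 h.symm⟩)))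

lemma adj_fringe_iff (i : Fin d) (y : N) :
    G.Adj (fringe i) y ↔ y ∈ insert (mid i) ((domeBase P top mid).erase (fringe i)) := by
  have hxB := hg.fringe_mem i
  have hxP : fringe i ∈ P := base_subset hxB
  have hxt : fringe i ≠ top := fringe_ne_top hg i
  rw [Finset.mem_insert]
  constructor
  · intro h
    have hyP : y ∈ P := hcl _ hxP hxt y h
    rcases (hg.adj_iff _ hxP _ hyP).1 h with
      ⟨h1, _⟩ | ⟨_, j, h2⟩ | ⟨_, h2, h3⟩ | ⟨j, ⟨h1, h2⟩ | ⟨h1, h2⟩⟩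
    · exact absurd h1 hxt
    · exact absurd h2 (fringe_ne_mid hg i j)
    · exact Or.inr (Finset.mem_erase.2 ⟨fun hy => h3 hy.symm, h2⟩)
    · exact absurd h1 (fringe_ne_mid hg i j)
    · exact Or.inl (by rw [h1, hg.fringe_inj h2])
  · rintro (rfl | hy)
    · exact ((adj_mid_iff hg hcl i (fringe i)).2 (Or.inr rfl)).symm
    · have hy' := Finset.mem_erase.1 hy
      exact (hg.adj_iff _ hxP _ (base_subset hy'.2)).2
        (Or.inr (Or.inr (Or.inl ⟨hxB, hy'.2, fun h => hy'.1 h.symm⟩)))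

lemma friendsIn_mid (S : Finset N) (i : Fin d) :
    friendsIn G S (mid i) = S ∩ {top, fringe i} := by
  ext y
  simp only [mem_friendsIn, adj_mid_iff hg hcl i, Finset.mem_inter, Finset.mem_insert,
    Finset.mem_singleton]

lemma friendsIn_base_nonfringe {x : N} (hx : x ∈ domeBase P top mid)
    (hxf : ∀ i, x ≠ fringe i) (S : Finset N) :
    friendsIn G S x = S ∩ ((domeBase P top mid).erase x) := by
  ext y
  simp only [mem_friendsIn, adj_base_nonfringe_iff hg hcl hx hxf, Finset.mem_inter]

lemma friendsIn_fringe (S : Finset N) (i : Fin d) :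
    friendsIn G S (fringe i) = S ∩ insert (mid i) ((domeBase P top mid).erase (fringe i)) := by
  ext y
  simp only [mem_friendsIn, adj_fringe_iff hg hcl i, Finset.mem_inter]

end Gadget


section Gadget2
variable {G : SimpleGraph N} {d k' : ℕ} {P : Finset N} {top : N} {mid fringe : Fin d → N}
variable (hg : IsDomeGadget G d k' P top mid fringe)
variable (hcl : ∀ x ∈ P, x ≠ top → ∀ y, G.Adj x y → y ∈ P)
include hg hcl

lemma friendsIn_mono_P {c : N} (hc : c ∈ P) (hct : c ≠ top) (S : Finset N) :
    friendsIn G S c ⊆ friendsIn G P c := by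
  intro y hy
  rcases mem_friendsIn.1 hy with ⟨_, hadj⟩
  exact mem_friendsIn.2 ⟨hcl _ hc hct _ hadj, hadj⟩

set_option maxHeartbeats 2000000 in
lemma step1_no_base {C : Finset N}
    (hd : 2 ≤ d) (hdk : 2*d + 4 ≤ k')
    (hsq : k' * k' ≤ 2 * Fintype.card N)
    (hltn : k' < Fintype.card N)
    (hnd : k' * (d+1) < Fintype.card N)
    (hblk : ∀ x ∈ C, x ∈ P → utilAvgEQ G P x < utilAvgEQ G C x) :
    ∀ x ∈ domeBase P top mid, x ∉ C := by
  classical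
  set B := domeBase P top mid with hBdef
  set n := Fintype.card N with hndef
  set m := B.card with hmdef
  have hm : m + d + 1 = k' := card_base hg
  -- numeric facts over ℚ
  have hmq : (m:ℚ) + (d:ℚ) + 1 = (k':ℚ) := by exact_mod_cast hm
  have hsqq : (k':ℚ) * (k':ℚ) ≤ 2 * (n:ℚ) := by exact_mod_cast hsq
  have hltq : (k':ℚ) < (n:ℚ) := by exact_mod_cast hltn
  have hdq : (2:ℚ) ≤ (d:ℚ) := by exact_mod_cast hd
  have hdkq : 2*(d:ℚ) + 4 ≤ (k':ℚ) := by exact_mod_cast hdk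
  have hndq : (k':ℚ) * ((d:ℚ)+1) < (n:ℚ) := by exact_mod_cast hnd
  have hn0 : (0:ℚ) ≤ (n:ℚ) := by positivity
  have hm0 : (0:ℚ) ≤ (m:ℚ) := by positivity
  have hBP : B ⊆ P := base_subset
  have hne_top : ∀ c ∈ B, c ≠ top := fun c hc h => top_not_mem_base (h ▸ hc)
  have hm1 : 1 ≤ m := by omega
  have hmd3 : d + 3 ≤ m := by omega
  -- friends of members of P (except top) within any S are inside their P-friends
  have hmono : ∀ c ∈ P, c ≠ top → ∀ S : Finset N,
      (friendsIn G S c).card ≤ (friendsIn G P c).card :=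
    fun c hc hct S => Finset.card_le_card (friendsIn_mono_P hg hcl hc hct S)
  -- friendsIn within P, by role
  have hfPnonf : ∀ c ∈ B, (∀ i, c ≠ fringe i) → friendsIn G P c = B.erase c := by
    intro c hc hcf
    rw [friendsIn_base_nonfringe hg hcl hc hcf]
    exact Finset.inter_eq_right.2 (fun z hz => hBP (Finset.mem_erase.1 hz).2)
  have hfPfr : ∀ j, friendsIn G P (fringe j) = insert (mid j) (B.erase (fringe j)) := by
    intro j
    rw [friendsIn_fringe hg hcl]
    refine Finset.inter_eq_right.2 (fun z hz => ?_)
    rcases Finset.mem_insert.1 hz with rfl | hz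
    · exact hg.mid_mem j
    · exact hBP (Finset.mem_erase.1 hz).2
  have hfPmid : ∀ j, friendsIn G P (mid j) = {top, fringe j} := by
    intro j
    rw [friendsIn_mid hg hcl]
    refine Finset.inter_eq_right.2 (fun z hz => ?_)
    rcases Finset.mem_insert.1 hz with rfl | hz
    · exact hg.top_mem
    · rw [Finset.mem_singleton.1 hz]
      exact hBP (hg.fringe_mem j)
  have hcBe : ∀ c ∈ B, (B.erase c).card = m - 1 := by
    intro c hc; rw [Finset.card_erase_of_mem hc]
  have hmidnotBe : ∀ j c, mid j ∉ B.erase c := fun j c h =>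
    mid_not_mem_base j (Finset.mem_erase.1 h).2
  have hcPfr : ∀ j, (friendsIn G P (fringe j)).card = m := by
    intro j
    rw [hfPfr j, Finset.card_insert_of_notMem (hmidnotBe j _),
      hcBe _ (hg.fringe_mem j)]
    omega
  have hcPnonf : ∀ c ∈ B, (∀ i, c ≠ fringe i) → (friendsIn G P c).card = m - 1 := by
    intro c hc hcf; rw [hfPnonf c hc hcf, hcBe c hc]
  have hcPmid : ∀ j, (friendsIn G P (mid j)).card = 2 := by
    intro j
    rw [hfPmid j, Finset.card_insert_of_notMem (by
      simp only [Finset.mem_singleton]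
      exact fun h => (fringe_ne_top hg j) h.symm), Finset.card_singleton]
  -- lower bounds for values at home
  have hlow : ∀ c ∈ B, (n:ℚ)*((m:ℚ)-1) - (k':ℚ) ≤ (fval G P c : ℚ) := by
    intro c hc
    have hge := fval_ge G P c
    rw [hg.card_eq] at hge
    have hgeq : (n:ℚ) * ((friendsIn G P c).card : ℚ) - (k':ℚ) ≤ (fval G P c : ℚ) := by
      exact_mod_cast hge
    have hcard : m - 1 ≤ (friendsIn G P c).card := by
      by_cases hcf : ∃ i, c = fringe i
      · obtain ⟨j, rfl⟩ := hcf; rw [hcPfr j]; omega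
      · push_neg at hcf; rw [hcPnonf c hc hcf]
    have hcq : (m:ℚ) - 1 ≤ ((friendsIn G P c).card : ℚ) := by
      have : ((m - 1 : ℕ) : ℚ) ≤ ((friendsIn G P c).card : ℚ) := by exact_mod_cast hcard
      have h1 : ((m - 1 : ℕ) : ℚ) = (m:ℚ) - 1 := by
        have : (1:ℕ) ≤ m := hm1
        push_cast [Nat.cast_sub this]; ring
      linarith [h1 ▸ this]
    nlinarith
  have hlowf : ∀ j, (n:ℚ)*(m:ℚ) - (k':ℚ) ≤ (fval G P (fringe j) : ℚ) := by
    intro j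
    have hge := fval_ge G P (fringe j)
    rw [hg.card_eq, hcPfr j] at hge
    exact_mod_cast hge
  have hlowm : ∀ j, 2*(n:ℚ) - (k':ℚ) ≤ (fval G P (mid j) : ℚ) := by
    intro j
    have hge := fval_ge G P (mid j)
    rw [hg.card_eq, hcPmid j] at hge
    have : (n:ℚ) * 2 - (k':ℚ) ≤ (fval G P (mid j) : ℚ) := by exact_mod_cast hge
    linarith
  -- exact value formulas
  have hfvP : ∀ c ∈ P, (fval G P c : ℚ)
      = ((n:ℚ)+1) * ((friendsIn G P c).card : ℚ) - ((k':ℚ) - 1) := by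
    intro c hc
    have h := fval_eq_of_mem (G := G) hc
    rw [hg.card_eq] at h
    exact_mod_cast h
  have hfvC : ∀ c ∈ C, (fval G C c : ℚ)
      = ((n:ℚ)+1) * ((friendsIn G C c).card : ℚ) - ((C.card:ℚ) - 1) := by
    intro c hc
    exact_mod_cast fval_eq_of_mem (G := G) hc
  by_contra hcon
  push_neg at hcon
  obtain ⟨x, hxB, hxC⟩ := hcon
  have hBCne : x ∈ B ∩ C := Finset.mem_inter.2 ⟨hxB, hxC⟩
  have hBC1 : 1 ≤ (B ∩ C).card := Finset.card_pos.2 ⟨x, hBCne⟩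
  -- friends of a base player within C are few
  have hfBC : ∀ c ∈ B, c ∈ C → ((friendsIn G C c).card : ℚ) ≤ ((B ∩ C).card : ℚ) := by
    intro c hc hcC
    have hcBC : c ∈ B ∩ C := Finset.mem_inter.2 ⟨hc, hcC⟩
    have h1 : 1 ≤ (B ∩ C).card := Finset.card_pos.2 ⟨c, hcBC⟩
    have hcard : (friendsIn G C c).card ≤ (B ∩ C).card := by
      by_cases hf : ∃ i, c = fringe i
      · obtain ⟨i, rfl⟩ := hf
        rw [friendsIn_fringe hg hcl]
        have hsub : C ∩ insert (mid i) (B.erase (fringe i))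
            ⊆ insert (mid i) ((B ∩ C).erase (fringe i)) := by
          intro z hz
          rcases Finset.mem_inter.1 hz with ⟨hzC, hz2⟩
          rcases Finset.mem_insert.1 hz2 with rfl | hz3
          · exact Finset.mem_insert_self _ _
          · rcases Finset.mem_erase.1 hz3 with ⟨hne, hzB⟩
            exact Finset.mem_insert_of_mem
              (Finset.mem_erase.2 ⟨hne, Finset.mem_inter.2 ⟨hzB, hzC⟩⟩)
        calc (C ∩ insert (mid i) (B.erase (fringe i))).card
            ≤ (insert (mid i) ((B ∩ C).erase (fringe i))).card := Finset.card_le_card hsub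
          _ ≤ ((B ∩ C).erase (fringe i)).card + 1 := Finset.card_insert_le _ _
          _ = (B ∩ C).card - 1 + 1 := by rw [Finset.card_erase_of_mem hcBC]
          _ ≤ (B ∩ C).card := by omega
      · push_neg at hf
        rw [friendsIn_base_nonfringe hg hcl hc hf]
        have hsub : C ∩ B.erase c ⊆ (B ∩ C).erase c := by
          intro z hz
          rcases Finset.mem_inter.1 hz with ⟨hzC, hz2⟩
          rcases Finset.mem_erase.1 hz2 with ⟨hne, hzB⟩
          exact Finset.mem_erase.2 ⟨hne, Finset.mem_inter.2 ⟨hzB, hzC⟩⟩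
        calc (C ∩ B.erase c).card ≤ ((B ∩ C).erase c).card := Finset.card_le_card hsub
          _ ≤ (B ∩ C).card := Finset.card_erase_le
    exact_mod_cast hcard
  -- value of a base player in C is at most n * |B ∩ C|
  have hBfval : ∀ c ∈ B, c ∈ C → (fval G C c : ℚ) ≤ (n : ℚ) * ((B ∩ C).card : ℚ) := by
    intro c hc hcC
    calc (fval G C c : ℚ) ≤ (n : ℚ) * ((friendsIn G C c).card : ℚ) := by
          exact_mod_cast fval_le G C c
      _ ≤ (n : ℚ) * ((B ∩ C).card : ℚ) := by
          have := hfBC c hc hcC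
          nlinarith
  -- upper bound for nonfringe base players in C
  have hUa : ∀ z ∈ B, z ∈ C → (∀ i, z ≠ fringe i) →
      utilAvgEQ G C z ≤ (n : ℚ) * ((B ∩ C).card : ℚ) := by
    intro z hzB hzC hzf
    apply utilAvgEQ_le
    intro c hcg
    rcases Finset.mem_insert.1 hcg with rfl | hcg
    · exact hBfval _ hzB hzC
    · rw [friendsIn_base_nonfringe hg hcl hzB hzf] at hcg
      rcases Finset.mem_inter.1 hcg with ⟨hcC, hc2⟩
      exact hBfval _ (Finset.mem_erase.1 hc2).2 hcC
  -- upper bound for fringe base players in C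
  have hUb : ∀ i, fringe i ∈ C →
      utilAvgEQ G C (fringe i) ≤ (n : ℚ) * (((B ∩ C).card : ℚ) + 1) := by
    intro i hiC
    apply utilAvgEQ_le
    have h1 : (1:ℚ) ≤ ((B ∩ C).card : ℚ) := by exact_mod_cast hBC1
    intro c hcg
    rcases Finset.mem_insert.1 hcg with rfl | hcg
    · have := hBfval _ (hg.fringe_mem i) hiC
      nlinarith
    · rw [friendsIn_fringe hg hcl] at hcg
      rcases Finset.mem_inter.1 hcg with ⟨hcC, hc2⟩
      rcases Finset.mem_insert.1 hc2 with rfl | hc3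
      · have hcard2 : ((friendsIn G C (mid i)).card : ℚ) ≤ 2 := by
          have hsub : friendsIn G C (mid i) ⊆ friendsIn G P (mid i) :=
            friendsIn_mono_P hg hcl (hg.mid_mem i) (hg.mid_ne_top i) C
          have hle := Finset.card_le_card hsub
          rw [hcPmid i] at hle
          exact_mod_cast hle
        have hfle : (fval G C (mid i) : ℚ) ≤ (n:ℚ) * ((friendsIn G C (mid i)).card : ℚ) := by
          exact_mod_cast fval_le G C (mid i)
        nlinarith
      · have := hBfval _ (Finset.mem_erase.1 hc3).2 hcC
        nlinarith
  -- home lower bound for fringe players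
  have hL1 : ∀ i : Fin d, (n : ℚ) * ((m : ℚ) - 2) < utilAvgEQ G P (fringe i) := by
    intro i
    have hgrp : insert (fringe i) (friendsIn G P (fringe i)) = insert (mid i) B := by
      rw [hfPfr i, Finset.insert_comm, Finset.insert_erase (hg.fringe_mem i)]
    rw [utilAvgEQ, hgrp]
    have hmnB : mid i ∉ B := mid_not_mem_base i
    have hcard : ((insert (mid i) B).card : ℚ) = (m:ℚ) + 1 := by
      rw [Finset.card_insert_of_notMem hmnB]
      push_cast
      rfl
    have hsum : (m:ℚ) * ((n:ℚ)*((m:ℚ)-1) - (k':ℚ)) ≤ ∑ c ∈ B, (fval G P c : ℚ) := by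
      calc (m:ℚ) * ((n:ℚ)*((m:ℚ)-1) - (k':ℚ))
          = B.card • ((n:ℚ)*((m:ℚ)-1) - (k':ℚ)) := by rw [nsmul_eq_mul]
        _ ≤ _ := Finset.card_nsmul_le_sum _ _ _ hlow
    rw [Finset.sum_insert hmnB, hcard, lt_div_iff₀ (by linarith)]
    have := hlowm i
    nlinarith
  -- home lower bound for nonfringe base players
  have hL2 : ∀ y ∈ B, (∀ i, y ≠ fringe i) →
      (n : ℚ) * ((m : ℚ) - 1) < utilAvgEQ G P y := by
    intro y hyB hyf
    have hgrp : insert y (friendsIn G P y) = B := by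
      rw [hfPnonf y hyB hyf, Finset.insert_erase hyB]
    rw [utilAvgEQ, hgrp]
    have hfilter : B.filter (fun c => ∃ i, c = fringe i) = Finset.univ.image fringe := by
      ext c
      simp only [Finset.mem_filter, Finset.mem_image, Finset.mem_univ, true_and]
      constructor
      · rintro ⟨_, i, rfl⟩; exact ⟨i, rfl⟩
      · rintro ⟨i, rfl⟩; exact ⟨hg.fringe_mem i, i, rfl⟩
    have hsum : (m:ℚ) * ((n:ℚ)*((m:ℚ)-1) - (k':ℚ)) + (n:ℚ)*(d:ℚ)
        ≤ ∑ c ∈ B, (fval G P c : ℚ) := by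
      have hpt : ∀ c ∈ B, ((n:ℚ)*((m:ℚ)-1) - (k':ℚ))
          + (if ∃ i, c = fringe i then (n:ℚ) else 0) ≤ (fval G P c : ℚ) := by
        intro c hc
        by_cases hcf : ∃ i, c = fringe i
        · obtain ⟨j, rfl⟩ := hcf
          rw [if_pos ⟨j, rfl⟩]
          have := hlowf j
          nlinarith
        · rw [if_neg hcf]
          simpa using hlow c hc
      calc (m:ℚ) * ((n:ℚ)*((m:ℚ)-1) - (k':ℚ)) + (n:ℚ)*(d:ℚ)
          = ∑ c ∈ B, (((n:ℚ)*((m:ℚ)-1) - (k':ℚ))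
            + (if ∃ i, c = fringe i then (n:ℚ) else 0)) := by
            rw [Finset.sum_add_distrib, Finset.sum_const, Finset.sum_ite, Finset.sum_const,
              Finset.sum_const, hfilter, Finset.card_image_of_injective _ hg.fringe_inj,
              Finset.card_univ, Fintype.card_fin]
            simp only [nsmul_eq_mul, smul_zero, add_zero]
            ring
        _ ≤ _ := Finset.sum_le_sum hpt
    have hcard : (B.card : ℚ) = (m:ℚ) := by rfl
    rw [hcard, lt_div_iff₀ (by linarith)]
    nlinarith
  -- there is a nonfringe base player in C
  have hy : ∃ y, y ∈ B ∧ y ∈ C ∧ ∀ i, y ≠ fringe i := by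
    by_cases hxf : ∀ i, x ≠ fringe i
    · exact ⟨x, hxB, hxC, hxf⟩
    · push_neg at hxf
      obtain ⟨i, hxi⟩ := hxf
      subst hxi
      have hchain : (n:ℚ) * ((m:ℚ) - 2) < (n:ℚ) * (((B ∩ C).card : ℚ) + 1) :=
        lt_of_lt_of_le (lt_trans (hL1 i) (hblk _ hxC (hBP hxB))) (hUb i hxC)
      have hnpos : (0:ℚ) < (n:ℚ) := by linarith
      have hq : (m:ℚ) - 2 < ((B ∩ C).card : ℚ) + 1 := lt_of_mul_lt_mul_left hchain hn0
      have hnat : m < (B ∩ C).card + 3 := by exact_mod_cast (by linarith : (m:ℚ) < ((B ∩ C).card : ℚ) + 3)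
      have hgt : d < (B ∩ C).card := by omega
      have hns : ¬ (B ∩ C ⊆ Finset.univ.image fringe) := by
        intro hsub
        have := Finset.card_le_card hsub
        rw [Finset.card_image_of_injective _ hg.fringe_inj, Finset.card_univ,
          Fintype.card_fin] at this
        omega
      obtain ⟨y, hyBC, hynot⟩ := Finset.not_subset.1 hns
      exact ⟨y, (Finset.mem_inter.1 hyBC).1, (Finset.mem_inter.1 hyBC).2,
        fun j hyj => hynot (hyj ▸ Finset.mem_image.2 ⟨j, Finset.mem_univ j, rfl⟩)⟩
  obtain ⟨y, hyB, hyC, hyf⟩ := hy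
  -- all of B is contained in C
  have hBsubC : B ⊆ C := by
    have hchain : (n:ℚ) * ((m:ℚ) - 1) < (n:ℚ) * ((B ∩ C).card : ℚ) :=
      lt_of_lt_of_le (lt_trans (hL2 y hyB hyf) (hblk _ hyC (hBP hyB))) (hUa y hyB hyC hyf)
    have hq : (m:ℚ) - 1 < ((B ∩ C).card : ℚ) := lt_of_mul_lt_mul_left hchain hn0
    have hnat : m < (B ∩ C).card + 1 := by exact_mod_cast (by linarith : (m:ℚ) < ((B ∩ C).card : ℚ) + 1)
    have heq : B ∩ C = B := Finset.eq_of_subset_of_card_le Finset.inter_subset_left (by omega)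
    intro z hz
    have : z ∈ B ∩ C := heq.symm ▸ hz
    exact (Finset.mem_inter.1 this).2
  have hCge : m ≤ C.card := le_trans (le_of_eq rfl) (Finset.card_le_card hBsubC)
  have hCgeq : (m:ℚ) ≤ (C.card:ℚ) := by exact_mod_cast hCge
  -- friendsIn within C for nonfringe base players
  have hfCnonf : ∀ c ∈ B, (∀ i, c ≠ fringe i) → friendsIn G C c = B.erase c := by
    intro c hc hcf
    rw [friendsIn_base_nonfringe hg hcl hc hcf]
    exact Finset.inter_eq_right.2 (fun z hz => hBsubC (Finset.mem_erase.1 hz).2)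
  have hgrpC : insert y (friendsIn G C y) = B := by
    rw [hfCnonf y hyB hyf, Finset.insert_erase hyB]
  have hgrpP : insert y (friendsIn G P y) = B := by
    rw [hfPnonf y hyB hyf, Finset.insert_erase hyB]
  have hSlt : ∑ c ∈ B, (fval G P c : ℚ) < ∑ c ∈ B, (fval G C c : ℚ) := by
    have h := sum_lt_of_util_lt (hgrpC.trans hgrpP.symm) (hblk y hyC (hBP hyB))
    rwa [hgrpP] at h
  -- all mids are in C
  have hmidall : ∀ i, mid i ∈ C := by
    by_contra hmc
    push_neg at hmc
    obtain ⟨i0, hi0⟩ := hmc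
    have hbound : ∀ c ∈ B, (fval G C c : ℚ) ≤ (fval G P c : ℚ) + ((k':ℚ) - (C.card:ℚ))
        - (if c = fringe i0 then (n:ℚ)+1 else 0) := by
      intro c hc
      by_cases hcf : c = fringe i0
      · subst hcf
        rw [if_pos rfl]
        have hfsub : friendsIn G C (fringe i0) ⊆ B.erase (fringe i0) := by
          rw [friendsIn_fringe hg hcl]
          intro z hz
          rcases Finset.mem_inter.1 hz with ⟨hzC, hz2⟩
          rcases Finset.mem_insert.1 hz2 with rfl | hz3
          · exact absurd hzC hi0
          · exact hz3
        have hfc : (friendsIn G C (fringe i0)).card ≤ m - 1 := by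
          have := Finset.card_le_card hfsub
          rwa [hcBe _ (hg.fringe_mem i0)] at this
        have hfcq : ((friendsIn G C (fringe i0)).card : ℚ) ≤ (m:ℚ) - 1 := by
          have h' : ((friendsIn G C (fringe i0)).card : ℚ) ≤ ((m - 1 : ℕ) : ℚ) := by
            exact_mod_cast hfc
          have h1 : ((m - 1 : ℕ) : ℚ) = (m:ℚ) - 1 := by
            push_cast [Nat.cast_sub hm1]; ring
          linarith [h1 ▸ h']
        rw [hfvC _ (hBsubC (hg.fringe_mem i0)), hfvP _ (hBP (hg.fringe_mem i0))]
        have hfp : ((friendsIn G P (fringe i0)).card : ℚ) = (m:ℚ) := by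
          exact_mod_cast hcPfr i0
        rw [hfp]
        nlinarith
      · rw [if_neg hcf]
        rw [hfvC _ (hBsubC hc), hfvP _ (hBP hc)]
        have hmc : ((friendsIn G C c).card : ℚ) ≤ ((friendsIn G P c).card : ℚ) := by
          exact_mod_cast hmono c (hBP hc) (hne_top c hc) C
        nlinarith
    have hsum_le : ∑ c ∈ B, (fval G C c : ℚ)
        ≤ ∑ c ∈ B, (fval G P c : ℚ) + (m:ℚ)*((k':ℚ) - (C.card:ℚ)) - ((n:ℚ)+1) := by
      calc ∑ c ∈ B, (fval G C c : ℚ)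
          ≤ ∑ c ∈ B, ((fval G P c : ℚ) + ((k':ℚ) - (C.card:ℚ))
            - (if c = fringe i0 then (n:ℚ)+1 else 0)) := Finset.sum_le_sum hbound
        _ = ∑ c ∈ B, (fval G P c : ℚ) + (m:ℚ)*((k':ℚ) - (C.card:ℚ)) - ((n:ℚ)+1) := by
            rw [Finset.sum_sub_distrib, Finset.sum_add_distrib, Finset.sum_const,
              Finset.sum_ite_eq' B (fringe i0) (fun _ => (n:ℚ)+1),
              if_pos (hg.fringe_mem i0)]
            simp only [nsmul_eq_mul]
            try ring
    -- contradiction: n + 1 < m (k' - |C|) ≤ m (d+1) < n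
    have h1 : (n:ℚ) + 1 < (m:ℚ) * ((k':ℚ) - (C.card:ℚ)) := by linarith
    have h2 : (k':ℚ) - (C.card:ℚ) ≤ (d:ℚ) + 1 := by linarith
    nlinarith
  -- C is exactly B together with the mids
  have hCeq : C = B ∪ Finset.univ.image mid := by
    have hfCfr : ∀ j, friendsIn G C (fringe j) = insert (mid j) (B.erase (fringe j)) := by
      intro j
      rw [friendsIn_fringe hg hcl]
      refine Finset.inter_eq_right.2 (fun z hz => ?_)
      rcases Finset.mem_insert.1 hz with rfl | hz
      · exact hmidall j
      · exact hBsubC (Finset.mem_erase.1 hz).2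
    have hsame : ∀ c ∈ B, ((friendsIn G C c).card : ℚ) = ((friendsIn G P c).card : ℚ) := by
      intro c hc
      by_cases hcf : ∃ i, c = fringe i
      · obtain ⟨j, rfl⟩ := hcf
        rw [hfCfr j, hfPfr j]
      · push_neg at hcf
        rw [hfCnonf c hc hcf, hfPnonf c hc hcf]
    have hdiff : ∀ c ∈ B, (fval G C c : ℚ)
        = (fval G P c : ℚ) + ((k':ℚ) - (C.card:ℚ)) := by
      intro c hc
      rw [hfvC _ (hBsubC hc), hfvP _ (hBP hc), hsame c hc]
      ring
    have hsum_eq : ∑ c ∈ B, (fval G C c : ℚ)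
        = ∑ c ∈ B, (fval G P c : ℚ) + (m:ℚ)*((k':ℚ) - (C.card:ℚ)) := by
      rw [Finset.sum_congr rfl hdiff, Finset.sum_add_distrib, Finset.sum_const]
      simp only [nsmul_eq_mul]
      rfl
    have hmpos : (0:ℚ) < (m:ℚ) := by
      have : (0:ℕ) < m := by omega
      exact_mod_cast this
    have hClt : (C.card:ℚ) < (k':ℚ) := by nlinarith [hSlt, hsum_eq]
    have hCltn : C.card < k' := by exact_mod_cast hClt
    have hdisj : Disjoint B (Finset.univ.image mid) := by
      rw [Finset.disjoint_right]
      intro z hz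
      rcases Finset.mem_image.1 hz with ⟨i, _, rfl⟩
      exact mid_not_mem_base i
    have hsub2 : B ∪ Finset.univ.image mid ⊆ C := by
      apply Finset.union_subset hBsubC
      intro z hz
      rcases Finset.mem_image.1 hz with ⟨i, _, rfl⟩
      exact hmidall i
    have hcardU : (B ∪ Finset.univ.image mid).card = m + d := by
      rw [Finset.card_union_of_disjoint hdisj,
        Finset.card_image_of_injective _ hg.mid_inj, Finset.card_univ, Fintype.card_fin]
    exact (Finset.eq_of_subset_of_card_le hsub2 (by omega)).symm
  -- final contradiction via a fringe player
  have hd0 : 0 < d := by omega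
  set i0 : Fin d := ⟨0, hd0⟩ with hi0def
  have hfr0B : fringe i0 ∈ B := hg.fringe_mem i0
  have hfr0C : fringe i0 ∈ C := hBsubC hfr0B
  have htopC : top ∉ C := by
    rw [hCeq]
    intro h
    rcases Finset.mem_union.1 h with h | h
    · exact top_not_mem_base h
    · rcases Finset.mem_image.1 h with ⟨i, _, hi⟩
      exact hg.mid_ne_top i hi
  have hCcard : C.card = m + d := by
    rw [hCeq, Finset.card_union_of_disjoint (by
      rw [Finset.disjoint_right]
      intro z hz
      rcases Finset.mem_image.1 hz with ⟨i, _, rfl⟩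
      exact mid_not_mem_base i),
      Finset.card_image_of_injective _ hg.mid_inj, Finset.card_univ, Fintype.card_fin]
  have hfCfr0 : friendsIn G C (fringe i0) = insert (mid i0) (B.erase (fringe i0)) := by
    rw [friendsIn_fringe hg hcl]
    refine Finset.inter_eq_right.2 (fun z hz => ?_)
    rcases Finset.mem_insert.1 hz with rfl | hz
    · exact hmidall i0
    · exact hBsubC (Finset.mem_erase.1 hz).2
  have hgrpC0 : insert (fringe i0) (friendsIn G C (fringe i0)) = insert (mid i0) B := by
    rw [hfCfr0, Finset.insert_comm, Finset.insert_erase hfr0B]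
  have hgrpP0 : insert (fringe i0) (friendsIn G P (fringe i0)) = insert (mid i0) B := by
    rw [hfPfr i0, Finset.insert_comm, Finset.insert_erase hfr0B]
  have hSlt0 := sum_lt_of_util_lt (hgrpC0.trans hgrpP0.symm) (hblk _ hfr0C (hBP hfr0B))
  rw [hgrpP0, Finset.sum_insert (mid_not_mem_base i0),
    Finset.sum_insert (mid_not_mem_base i0)] at hSlt0
  -- value of the mid in C
  have hfCmid0 : friendsIn G C (mid i0) = {fringe i0} := by
    rw [friendsIn_mid hg hcl]
    ext z
    simp only [Finset.mem_inter, Finset.mem_insert, Finset.mem_singleton]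
    constructor
    · rintro ⟨hzC, rfl | rfl⟩
      · exact absurd hzC htopC
      · rfl
    · rintro rfl
      exact ⟨hfr0C, Or.inr rfl⟩
  have hvCmid : (fval G C (mid i0) : ℚ) = ((n:ℚ)+1) - ((C.card:ℚ) - 1) := by
    rw [hfvC _ (hmidall i0), hfCmid0, Finset.card_singleton]
    push_cast
    ring
  have hvPmid : (fval G P (mid i0) : ℚ) = ((n:ℚ)+1)*2 - ((k':ℚ) - 1) := by
    rw [hfvP _ (hg.mid_mem i0)]
    have : ((friendsIn G P (mid i0)).card : ℚ) = 2 := by exact_mod_cast hcPmid i0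
    rw [this]
  -- base values in C
  have hsum_eq : ∑ c ∈ B, (fval G C c : ℚ)
      = ∑ c ∈ B, (fval G P c : ℚ) + (m:ℚ)*((k':ℚ) - (C.card:ℚ)) := by
    have hfCfr : ∀ j, friendsIn G C (fringe j) = insert (mid j) (B.erase (fringe j)) := by
      intro j
      rw [friendsIn_fringe hg hcl]
      refine Finset.inter_eq_right.2 (fun z hz => ?_)
      rcases Finset.mem_insert.1 hz with rfl | hz
      · exact hmidall j
      · exact hBsubC (Finset.mem_erase.1 hz).2
    have hdiff : ∀ c ∈ B, (fval G C c : ℚ)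
        = (fval G P c : ℚ) + ((k':ℚ) - (C.card:ℚ)) := by
      intro c hc
      have hsame : ((friendsIn G C c).card : ℚ) = ((friendsIn G P c).card : ℚ) := by
        by_cases hcf : ∃ i, c = fringe i
        · obtain ⟨j, rfl⟩ := hcf
          rw [hfCfr j, hfPfr j]
        · push_neg at hcf
          rw [hfCnonf c hc hcf, hfPnonf c hc hcf]
      rw [hfvC _ (hBsubC hc), hfvP _ (hBP hc), hsame]
      ring
    rw [Finset.sum_congr rfl hdiff, Finset.sum_add_distrib, Finset.sum_const]
    simp only [nsmul_eq_mul]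
    rfl
  have hCcq : (C.card:ℚ) = (m:ℚ) + (d:ℚ) := by exact_mod_cast hCcard
  rw [hvCmid, hvPmid, hsum_eq, hCcq] at hSlt0
  -- now hSlt0 reads: (n+1)*2 - (k'-1) + S < (n+1) - (m+d-1) + (S + m*(k' - (m+d)))
  -- i.e. 0 < -n + m  using k' = m + d + 1; contradiction since m < k' < n
  have hmk : (m:ℚ) < (n:ℚ) := by linarith
  nlinarith [hSlt0, hmq]

set_option maxHeartbeats 1000000 in
lemma step2_no_mid {C : Finset N}
    (hd : 2 ≤ d) (hdk12 : d + 12 ≤ k')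
    (hltn : k' < Fintype.card N)
    (htop4 : (friendsIn G C top).card ≤ 4)
    (hbe : ∀ z ∈ domeBase P top mid, z ∉ C)
    (hblk : ∀ x ∈ C, x ∈ P → utilAvgEQ G P x < utilAvgEQ G C x)
    (i : Fin d) : mid i ∉ C := by
  classical
  intro hiC
  set B := domeBase P top mid with hBdef
  set n := Fintype.card N with hndef
  set m := B.card with hmdef
  have hm : m + d + 1 = k' := card_base hg
  have hltq : (k':ℚ) < (n:ℚ) := by exact_mod_cast hltn
  have hmq : (m:ℚ) + (d:ℚ) + 1 = (k':ℚ) := by exact_mod_cast hm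
  have hdq : (2:ℚ) ≤ (d:ℚ) := by exact_mod_cast hd
  have hn0 : (0:ℚ) ≤ (n:ℚ) := by positivity
  have hBP : B ⊆ P := base_subset
  have hfPmid : friendsIn G P (mid i) = {top, fringe i} := by
    rw [friendsIn_mid hg hcl]
    refine Finset.inter_eq_right.2 (fun z hz => ?_)
    rcases Finset.mem_insert.1 hz with rfl | hz
    · exact hg.top_mem
    · rw [Finset.mem_singleton.1 hz]
      exact hBP (hg.fringe_mem i)
  have hgrp : insert (mid i) (friendsIn G P (mid i)) = {mid i, top, fringe i} := by
    rw [hfPmid]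
  have hne1 : mid i ∉ ({top, fringe i} : Finset N) := by
    simp only [Finset.mem_insert, Finset.mem_singleton]
    rintro (h | h)
    · exact hg.mid_ne_top i h
    · exact (fringe_ne_mid hg i i) h.symm
  have hne2 : top ∉ ({fringe i} : Finset N) := by
    simp only [Finset.mem_singleton]
    exact fun h => (fringe_ne_top hg i) h.symm
  have hctf : ({top, fringe i} : Finset N).card = 2 := by
    rw [Finset.card_insert_of_notMem hne2, Finset.card_singleton]
  have hcard3 : ((({mid i, top, fringe i} : Finset N)).card : ℚ) = 3 := by
    rw [Finset.card_insert_of_notMem hne1, hctf]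
    norm_num
  have hlowm : 2*(n:ℚ) - (k':ℚ) ≤ (fval G P (mid i) : ℚ) := by
    have hge := fval_ge G P (mid i)
    rw [hg.card_eq, hfPmid, hctf] at hge
    have hq : (n:ℚ) * 2 - (k':ℚ) ≤ (fval G P (mid i) : ℚ) := by exact_mod_cast hge
    linarith
  have hlowtop : 2*(n:ℚ) - (k':ℚ) ≤ (fval G P top : ℚ) := by
    have hsub : Finset.univ.image mid ⊆ friendsIn G P top := by
      intro z hz
      obtain ⟨j, _, rfl⟩ := Finset.mem_image.1 hz
      exact mem_friendsIn.2 ⟨hg.mid_mem j, ((adj_mid_iff hg hcl j top).2 (Or.inl rfl)).symm⟩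
    have hcard : 2 ≤ (friendsIn G P top).card := by
      have hc := Finset.card_le_card hsub
      rw [Finset.card_image_of_injective _ hg.mid_inj, Finset.card_univ,
        Fintype.card_fin] at hc
      omega
    have hge := fval_ge G P top
    rw [hg.card_eq] at hge
    have hcq : (2:ℚ) ≤ ((friendsIn G P top).card : ℚ) := by exact_mod_cast hcard
    have hgq : (n:ℚ) * ((friendsIn G P top).card:ℚ) - (k':ℚ) ≤ (fval G P top : ℚ) := by
      exact_mod_cast hge
    nlinarith
  have hm1 : 1 ≤ m := by omega
  have hfPfr : friendsIn G P (fringe i) = insert (mid i) (B.erase (fringe i)) := by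
    rw [friendsIn_fringe hg hcl]
    refine Finset.inter_eq_right.2 (fun z hz => ?_)
    rcases Finset.mem_insert.1 hz with rfl | hz
    · exact hg.mid_mem i
    · exact hBP (Finset.mem_erase.1 hz).2
  have hcPfr : (friendsIn G P (fringe i)).card = m := by
    rw [hfPfr, Finset.card_insert_of_notMem
        (fun h => mid_not_mem_base i (Finset.mem_erase.1 h).2),
      Finset.card_erase_of_mem (hg.fringe_mem i)]
    have hBd : (domeBase P top mid).card = m := rfl
    omega
  have hlowfr : (n:ℚ)*(m:ℚ) - (k':ℚ) ≤ (fval G P (fringe i) : ℚ) := by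
    have hge := fval_ge G P (fringe i)
    rw [hg.card_eq, hcPfr] at hge
    exact_mod_cast hge
  have hhome : 4*(n:ℚ) < utilAvgEQ G P (mid i) := by
    rw [utilAvgEQ, hgrp, hcard3, Finset.sum_insert hne1, Finset.sum_insert hne2,
      Finset.sum_singleton, lt_div_iff₀ (by norm_num : (0:ℚ) < 3)]
    have hm11 : (11:ℚ) ≤ (m:ℚ) := by exact_mod_cast (by omega : 11 ≤ m)
    nlinarith
  have hupper : utilAvgEQ G C (mid i) ≤ 4*(n:ℚ) := by
    apply utilAvgEQ_le
    intro c hcg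
    rcases Finset.mem_insert.1 hcg with rfl | hcg
    · have hsub : friendsIn G C (mid i) ⊆ {top} := by
        rw [friendsIn_mid hg hcl]
        intro z hz
        rcases Finset.mem_inter.1 hz with ⟨hzC, hz2⟩
        rcases Finset.mem_insert.1 hz2 with rfl | hz3
        · exact Finset.mem_singleton_self _
        · rw [Finset.mem_singleton.1 hz3] at hzC ⊢
          exact absurd hzC (hbe _ (hg.fringe_mem i))
      have hc1 : ((friendsIn G C (mid i)).card : ℚ) ≤ 1 := by
        have hc := Finset.card_le_card hsub
        rw [Finset.card_singleton] at hc
        exact_mod_cast hc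
      have hq : (fval G C (mid i):ℚ) ≤ (n:ℚ) * ((friendsIn G C (mid i)).card : ℚ) := by
        exact_mod_cast fval_le G C (mid i)
      nlinarith
    · have hz2 := mem_friendsIn.1 hcg
      have hct : c = top := by
        rcases (adj_mid_iff hg hcl i c).1 hz2.2 with h | h
        · exact h
        · exact absurd (h ▸ hz2.1) (hbe _ (hg.fringe_mem i))
      rw [hct]
      have hq : (fval G C top : ℚ) ≤ (n:ℚ) * ((friendsIn G C top).card : ℚ) := by
        exact_mod_cast fval_le G C top
      have h4 : ((friendsIn G C top).card : ℚ) ≤ 4 := by exact_mod_cast htop4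
      nlinarith
  exact absurd (hblk _ hiC (hg.mid_mem i)) (not_lt.2 (hupper.trans hhome.le))

end Gadget2

end Helpers

set_option maxHeartbeats 2000000 in
/-- In the avg-EQ reduction instance, every member of a coalition `C` blocking `Γ`
is a vertex player, an edge player, an incidence player, or a mid player of a vertex
gadget (i.e. a neighbor of some `vp v` inside `Pv v`); in particular `C` contains no
base-clique players and no mid players of edge or incidence gadgets. -/
theorem avgEQ_blocking_members {V N : Type*} [Fintype V] [DecidableEq V]
    [Fintype N] [DecidableEq N]
    (H : SimpleGraph V) (k : ℕ) (hk : 4 ≤ k)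
    (hsize : k ^ 2 ≤ Fintype.card V + H.edgeFinset.card)
    (G : SimpleGraph N) (Pv : V → Finset N) (Pe : Sym2 V → Finset N)
    (Pve : V → Sym2 V → Finset N)
    (vp : V → N) (ep : Sym2 V → N) (bp : V → Sym2 V → N)
    (R : AvgEQReduction H k G Pv Pe Pve vp ep bp)
    (Γ : CoalitionStructure N) (hΓ : IsAvgGamma H Pv Pe Pve Γ)
    (C : Finset N) (hC : Blocks (utilAvgEQ G) Γ C) :
    ∀ i ∈ C, (∃ v : V, i = vp v) ∨ (∃ e ∈ H.edgeSet, i = ep e) ∨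
      (∃ (v : V), ∃ e ∈ H.edgeSet, v ∈ e ∧ i = bp v e) ∨
      (∃ v : V, i ∈ Pv v ∧ G.Adj (vp v) i) := by
  classical
  intro i hiC
  obtain ⟨hCne, hblks⟩ := hC
  obtain ⟨hΓv, hΓe, hΓve⟩ := hΓ
  -- membership of the top players in their gadgets
  have hvp_mem : ∀ v : V, vp v ∈ Pv v := by
    intro v
    obtain ⟨m1, f1, hg1⟩ := R.dome_v v
    exact hg1.top_mem
  have hep_mem : ∀ e ∈ H.edgeSet, ep e ∈ Pe e := by
    intro e he
    obtain ⟨m1, f1, hg1⟩ := R.dome_e e he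
    exact hg1.top_mem
  have hbp_mem : ∀ (v : V), ∀ e ∈ H.edgeSet, v ∈ e → bp v e ∈ Pve v e := by
    intro v e he hve
    obtain ⟨m1, f1, hg1⟩ := R.dome_ve v e he hve
    exact hg1.top_mem
  -- numeric groundwork
  obtain ⟨hk'lb, hk'ub⟩ := avgK'_facts k hk
  have hkk : k ^ 2 = k * k := by ring
  have hedge : ∀ e ∈ H.edgeFinset, (Pe e).card = avgK' k := by
    intro e he
    obtain ⟨m1, f1, hg1⟩ := R.dome_e e (SimpleGraph.mem_edgeFinset.1 he)
    exact hg1.card_eq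
  have hvcard : ∀ v : V, (Pv v).card = avgK' k := by
    intro v
    obtain ⟨m1, f1, hg1⟩ := R.dome_v v
    exact hg1.card_eq
  have hAcard : ((Finset.univ : Finset V).biUnion Pv).card = Fintype.card V * avgK' k := by
    rw [Finset.card_biUnion (fun v _ w _ hvw => R.disj_vv v w hvw),
      Finset.sum_congr rfl (fun v _ => hvcard v), Finset.sum_const, Finset.card_univ,
      smul_eq_mul]
  have hBcard : (H.edgeFinset.biUnion Pe).card = H.edgeFinset.card * avgK' k := by
    rw [Finset.card_biUnion (fun e he f hf hef =>
        R.disj_ee e (SimpleGraph.mem_edgeFinset.1 he) f (SimpleGraph.mem_edgeFinset.1 hf) hef),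
      Finset.sum_congr rfl hedge, Finset.sum_const, smul_eq_mul]
  have hdisjAB : Disjoint ((Finset.univ : Finset V).biUnion Pv) (H.edgeFinset.biUnion Pe) := by
    rw [Finset.disjoint_left]
    intro a ha hb
    obtain ⟨v, _, hav⟩ := Finset.mem_biUnion.1 ha
    obtain ⟨e, heE, hae⟩ := Finset.mem_biUnion.1 hb
    exact (Finset.disjoint_left.1 (R.disj_v_e v e (SimpleGraph.mem_edgeFinset.1 heE)) hav) hae
  have hnN : (Fintype.card V + H.edgeFinset.card) * avgK' k ≤ Fintype.card N := by
    calc (Fintype.card V + H.edgeFinset.card) * avgK' k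
        = ((Finset.univ : Finset V).biUnion Pv ∪ H.edgeFinset.biUnion Pe).card := by
          rw [Finset.card_union_of_disjoint hdisjAB, hAcard, hBcard]
          ring
      _ ≤ (Finset.univ : Finset N).card := Finset.card_le_univ _
      _ = Fintype.card N := Finset.card_univ
  have hnk : k * k * avgK' k ≤ Fintype.card N := by
    rw [← hkk]
    exact le_trans (Nat.mul_le_mul_right _ hsize) hnN
  have hk'pos : 1 ≤ avgK' k := by omega
  have hsqN : avgK' k * avgK' k ≤ 2 * Fintype.card N := by nlinarith [hnk, hk'ub, hk]
  have hltnN : avgK' k < Fintype.card N := by nlinarith [hnk, hk, hk'pos]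
  have hndv : avgK' k * (k - 1 + 1) < Fintype.card N := by
    have h : k - 1 + 1 = k := by omega
    rw [h]
    nlinarith [hnk, hk, hk'pos]
  have hnd2 : avgK' k * (2 + 1) < Fintype.card N := by nlinarith [hnk, hk, hk'pos]
  have hdkv : 2 * (k - 1) + 4 ≤ avgK' k := by omega
  have hdk2 : 2 * 2 + 4 ≤ avgK' k := by omega
  have hdv : 2 ≤ k - 1 := by omega
  have hd12 : 2 + 12 ≤ avgK' k := by omega
  -- the gadgets are closed except at their tops
  have hclv : ∀ v : V, ∀ x ∈ Pv v, x ≠ vp v → ∀ y, G.Adj x y → y ∈ Pv v := by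
    intro v x hx hxt y hadj
    rcases R.adj_cases x y hadj with ⟨w, hxw, hyw⟩ | ⟨e, he, hxe, hye⟩ |
      ⟨w, e, he, hwe, hxe, hye⟩ | ⟨w, e, he, hwe, hcase⟩ | ⟨w, e, he, hwe, hcase⟩
    · by_cases hvw : v = w
      · exact hvw ▸ hyw
      · exact absurd hxw (Finset.disjoint_left.1 (R.disj_vv v w hvw) hx)
    · exact absurd hxe (Finset.disjoint_left.1 (R.disj_v_e v e he) hx)
    · exact absurd hxe (Finset.disjoint_left.1 (R.disj_v_b v w e he hwe) hx)
    · rcases hcase with ⟨hxbp, hyvp⟩ | ⟨hybp, hxvp⟩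
      · have hxm : x ∈ Pve w e := by rw [hxbp]; exact hbp_mem w e he hwe
        exact absurd hxm (Finset.disjoint_left.1 (R.disj_v_b v w e he hwe) hx)
      · by_cases hvw : v = w
        · exact absurd (hxvp.trans (congrArg vp hvw.symm)) hxt
        · have hxm : x ∈ Pv w := by rw [hxvp]; exact hvp_mem w
          exact absurd hxm (Finset.disjoint_left.1 (R.disj_vv v w hvw) hx)
    · rcases hcase with ⟨hxbp, hyep⟩ | ⟨hybp, hxep⟩
      · have hxm : x ∈ Pve w e := by rw [hxbp]; exact hbp_mem w e he hwe
        exact absurd hxm (Finset.disjoint_left.1 (R.disj_v_b v w e he hwe) hx)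
      · have hxm : x ∈ Pe e := by rw [hxep]; exact hep_mem e he
        exact absurd hxm (Finset.disjoint_left.1 (R.disj_v_e v e he) hx)
  have hcle : ∀ e ∈ H.edgeSet, ∀ x ∈ Pe e, x ≠ ep e → ∀ y, G.Adj x y → y ∈ Pe e := by
    intro e he x hx hxt y hadj
    rcases R.adj_cases x y hadj with ⟨w, hxw, hyw⟩ | ⟨f, hf, hxf, hyf⟩ |
      ⟨w, f, hf, hwf, hxf, hyf⟩ | ⟨w, f, hf, hwf, hcase⟩ | ⟨w, f, hf, hwf, hcase⟩
    · exact absurd hx (Finset.disjoint_left.1 (R.disj_v_e w e he) hxw)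
    · by_cases hef : e = f
      · exact hef ▸ hyf
      · exact absurd hxf (Finset.disjoint_left.1 (R.disj_ee e he f hf hef) hx)
    · exact absurd hxf (Finset.disjoint_left.1 (R.disj_e_b e he w f hf hwf) hx)
    · rcases hcase with ⟨hxbp, _⟩ | ⟨_, hxvp⟩
      · have hxm : x ∈ Pve w f := by rw [hxbp]; exact hbp_mem w f hf hwf
        exact absurd hxm (Finset.disjoint_left.1 (R.disj_e_b e he w f hf hwf) hx)
      · have hxm : x ∈ Pv w := by rw [hxvp]; exact hvp_mem w
        exact absurd hx (Finset.disjoint_left.1 (R.disj_v_e w e he) hxm)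
    · rcases hcase with ⟨hxbp, _⟩ | ⟨hybp, hxep⟩
      · have hxm : x ∈ Pve w f := by rw [hxbp]; exact hbp_mem w f hf hwf
        exact absurd hxm (Finset.disjoint_left.1 (R.disj_e_b e he w f hf hwf) hx)
      · by_cases hef : e = f
        · exact absurd (hxep.trans (congrArg ep hef.symm)) hxt
        · have hxm : x ∈ Pe f := by rw [hxep]; exact hep_mem f hf
          exact absurd hxm (Finset.disjoint_left.1 (R.disj_ee e he f hf hef) hx)
  have hclve : ∀ (v : V), ∀ e ∈ H.edgeSet, v ∈ e → ∀ x ∈ Pve v e, x ≠ bp v e →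
      ∀ y, G.Adj x y → y ∈ Pve v e := by
    intro v e he hve x hx hxt y hadj
    rcases R.adj_cases x y hadj with ⟨w, hxw, hyw⟩ | ⟨f, hf, hxf, hyf⟩ |
      ⟨w, f, hf, hwf, hxf, hyf⟩ | ⟨w, f, hf, hwf, hcase⟩ | ⟨w, f, hf, hwf, hcase⟩
    · exact absurd hx (Finset.disjoint_left.1 (R.disj_v_b w v e he hve) hxw)
    · exact absurd hx (Finset.disjoint_left.1 (R.disj_e_b f hf v e he hve) hxf)
    · by_cases hvw : (v, e) = (w, f)
      · have h1 : v = w := congrArg Prod.fst hvw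
        have h2 : e = f := congrArg Prod.snd hvw
        subst h1; subst h2
        exact hyf
      · exact absurd hxf (Finset.disjoint_left.1 (R.disj_bb v e he hve w f hf hwf hvw) hx)
    · rcases hcase with ⟨hxbp, _⟩ | ⟨_, hxvp⟩
      · by_cases hvw : (v, e) = (w, f)
        · have h1 : v = w := congrArg Prod.fst hvw
          have h2 : e = f := congrArg Prod.snd hvw
          subst h1; subst h2
          exact absurd hxbp hxt
        · have hxm : x ∈ Pve w f := by rw [hxbp]; exact hbp_mem w f hf hwf
          exact absurd hxm (Finset.disjoint_left.1 (R.disj_bb v e he hve w f hf hwf hvw) hx)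
      · have hxm : x ∈ Pv w := by rw [hxvp]; exact hvp_mem w
        exact absurd hx (Finset.disjoint_left.1 (R.disj_v_b w v e he hve) hxm)
    · rcases hcase with ⟨hxbp, _⟩ | ⟨_, hxep⟩
      · by_cases hvw : (v, e) = (w, f)
        · have h1 : v = w := congrArg Prod.fst hvw
          have h2 : e = f := congrArg Prod.snd hvw
          subst h1; subst h2
          exact absurd hxbp hxt
        · have hxm : x ∈ Pve w f := by rw [hxbp]; exact hbp_mem w f hf hwf
          exact absurd hxm (Finset.disjoint_left.1 (R.disj_bb v e he hve w f hf hwf hvw) hx)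
      · have hxm : x ∈ Pe f := by rw [hxep]; exact hep_mem f hf
        exact absurd hx (Finset.disjoint_left.1 (R.disj_e_b f hf v e he hve) hxm)
  -- a four-element bound
  have hcard4 : ∀ a b c e : N, ({a, b, c, e} : Finset N).card ≤ 4 := by
    intro a b c e
    have h1 := Finset.card_insert_le a ({b, c, e} : Finset N)
    have h2 := Finset.card_insert_le b ({c, e} : Finset N)
    have h3 := Finset.card_insert_le c ({e} : Finset N)
    simp only [Finset.card_singleton] at h3
    omega
  -- the tops of edge gadgets have at most four friends
  have htope : ∀ e ∈ H.edgeSet, (friendsIn G C (ep e)).card ≤ 4 := by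
    intro e
    induction e using Sym2.ind with
    | _ a b =>
    intro he
    obtain ⟨m1, f1, hge⟩ := R.dome_e _ he
    have hepm : ep s(a, b) ∈ Pe s(a, b) := hge.top_mem
    have hsub : friendsIn G C (ep s(a, b)) ⊆ {m1 0, m1 1, bp a s(a, b), bp b s(a, b)} := by
      intro y hy
      rcases mem_friendsIn.1 hy with ⟨hyC, hadj⟩
      rcases R.adj_cases _ _ hadj with ⟨w, hxw, hyw⟩ | ⟨f, hf, hxf, hyf⟩ |
        ⟨w, f, hf, hwf, hxf, hyf⟩ | ⟨w, f, hf, hwf, hcase⟩ | ⟨w, f, hf, hwf, hcase⟩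
      · exact absurd hepm (Finset.disjoint_left.1 (R.disj_v_e w _ he) hxw)
      · by_cases hef : s(a, b) = f
        · subst hef
          rcases (hge.adj_iff _ hepm _ hyf).1 hadj with ⟨_, j, hj⟩ | ⟨_, j, hj⟩ |
            ⟨hxB, _, _⟩ | ⟨j, ⟨hj1, _⟩ | ⟨_, hj2⟩⟩
          · rw [hj]
            fin_cases j <;> simp
          · exact absurd hj.symm (hge.mid_ne_top j)
          · exact absurd hxB top_not_mem_base
          · exact absurd hj1.symm (hge.mid_ne_top j)
          · have hmem := hge.fringe_mem j
            rw [← hj2] at hmem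
            exact absurd hmem top_not_mem_base
        · exact absurd hxf (Finset.disjoint_left.1 (R.disj_ee _ he f hf hef) hepm)
      · exact absurd hxf (Finset.disjoint_left.1 (R.disj_e_b _ he w f hf hwf) hepm)
      · rcases hcase with ⟨hxbp, _⟩ | ⟨_, hxvp⟩
        · have hxm : ep s(a, b) ∈ Pve w f := by rw [hxbp]; exact hbp_mem w f hf hwf
          exact absurd hxm (Finset.disjoint_left.1 (R.disj_e_b _ he w f hf hwf) hepm)
        · have hxm : ep s(a, b) ∈ Pv w := by rw [hxvp]; exact hvp_mem w
          exact absurd hepm (Finset.disjoint_left.1 (R.disj_v_e w _ he) hxm)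
      · rcases hcase with ⟨hxbp, _⟩ | ⟨hybp, hxep⟩
        · have hxm : ep s(a, b) ∈ Pve w f := by rw [hxbp]; exact hbp_mem w f hf hwf
          exact absurd hxm (Finset.disjoint_left.1 (R.disj_e_b _ he w f hf hwf) hepm)
        · by_cases hef : s(a, b) = f
          · subst hef
            rw [hybp]
            rcases Sym2.mem_iff.1 hwf with rfl | rfl
            · simp
            · simp
          · have hxm : ep s(a, b) ∈ Pe f := by rw [hxep]; exact hep_mem f hf
            exact absurd hxm (Finset.disjoint_left.1 (R.disj_ee _ he f hf hef) hepm)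
    exact le_trans (Finset.card_le_card hsub) (hcard4 _ _ _ _)
  -- the tops of incidence gadgets have at most four friends
  have htopb : ∀ (v : V), ∀ e ∈ H.edgeSet, v ∈ e → (friendsIn G C (bp v e)).card ≤ 4 := by
    intro v e he hve
    obtain ⟨m1, f1, hgb⟩ := R.dome_ve v e he hve
    have hbpm : bp v e ∈ Pve v e := hgb.top_mem
    have hsub : friendsIn G C (bp v e) ⊆ {m1 0, m1 1, vp v, ep e} := by
      intro y hy
      rcases mem_friendsIn.1 hy with ⟨hyC, hadj⟩
      rcases R.adj_cases _ _ hadj with ⟨w, hxw, hyw⟩ | ⟨f, hf, hxf, hyf⟩ |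
        ⟨w, f, hf, hwf, hxf, hyf⟩ | ⟨w, f, hf, hwf, hcase⟩ | ⟨w, f, hf, hwf, hcase⟩
      · exact absurd hbpm (Finset.disjoint_left.1 (R.disj_v_b w v e he hve) hxw)
      · exact absurd hbpm (Finset.disjoint_left.1 (R.disj_e_b f hf v e he hve) hxf)
      · by_cases hvw : (v, e) = (w, f)
        · have h1 : v = w := congrArg Prod.fst hvw
          have h2 : e = f := congrArg Prod.snd hvw
          subst h1; subst h2
          rcases (hgb.adj_iff _ hbpm _ hyf).1 hadj with ⟨_, j, hj⟩ | ⟨_, j, hj⟩ |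
            ⟨hxB, _, _⟩ | ⟨j, ⟨hj1, _⟩ | ⟨_, hj2⟩⟩
          · rw [hj]
            fin_cases j <;> simp
          · exact absurd hj.symm (hgb.mid_ne_top j)
          · exact absurd hxB top_not_mem_base
          · exact absurd hj1.symm (hgb.mid_ne_top j)
          · have hmem := hgb.fringe_mem j
            rw [← hj2] at hmem
            exact absurd hmem top_not_mem_base
        · exact absurd hxf (Finset.disjoint_left.1 (R.disj_bb v e he hve w f hf hwf hvw) hbpm)
      · rcases hcase with ⟨hxbp, hyvp⟩ | ⟨_, hxvp⟩
        · by_cases hvw : (v, e) = (w, f)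
          · have h1 : v = w := congrArg Prod.fst hvw
            rw [hyvp, ← h1]
            simp
          · have hxm : bp v e ∈ Pve w f := by rw [hxbp]; exact hbp_mem w f hf hwf
            exact absurd hxm (Finset.disjoint_left.1 (R.disj_bb v e he hve w f hf hwf hvw) hbpm)
        · have hxm : bp v e ∈ Pv w := by rw [hxvp]; exact hvp_mem w
          exact absurd hbpm (Finset.disjoint_left.1 (R.disj_v_b w v e he hve) hxm)
      · rcases hcase with ⟨hxbp, hyep⟩ | ⟨_, hxep⟩
        · by_cases hvw : (v, e) = (w, f)
          · have h2 : e = f := congrArg Prod.snd hvw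
            rw [hyep, ← h2]
            simp
          · have hxm : bp v e ∈ Pve w f := by rw [hxbp]; exact hbp_mem w f hf hwf
            exact absurd hxm (Finset.disjoint_left.1 (R.disj_bb v e he hve w f hf hwf hvw) hbpm)
        · have hxm : bp v e ∈ Pe f := by rw [hxep]; exact hep_mem f hf
          exact absurd hbpm (Finset.disjoint_left.1 (R.disj_e_b f hf v e he hve) hxm)
    exact le_trans (Finset.card_le_card hsub) (hcard4 _ _ _ _)
  -- case analysis on the gadget containing i
  rcases R.cover i with ⟨v, hiv⟩ | ⟨e, he, hie⟩ | ⟨v, e, he, hve, hie⟩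
  · -- vertex gadget
    obtain ⟨m1, f1, hg1⟩ := R.dome_v v
    have hblkv : ∀ x ∈ C, x ∈ Pv v → utilAvgEQ G (Pv v) x < utilAvgEQ G C x := by
      intro x hxC hxP
      have h := hblks x hxC
      rwa [hΓv v x hxP] at h
    by_cases hit : i = vp v
    · exact Or.inl ⟨v, hit⟩
    by_cases him : ∃ j, i = m1 j
    · obtain ⟨j, hij⟩ := him
      refine Or.inr (Or.inr (Or.inr ⟨v, hiv, ?_⟩))
      rw [hij]
      exact (hg1.adj_iff _ hg1.top_mem _ (hg1.mid_mem j)).2 (Or.inl ⟨rfl, j, rfl⟩)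
    · have hiB : i ∈ domeBase (Pv v) (vp v) m1 := by
        simp only [domeBase, Finset.mem_sdiff, Finset.mem_insert, Finset.mem_image,
          Finset.mem_univ, true_and]
        refine ⟨hiv, ?_⟩
        rintro (h | ⟨j, hj⟩)
        · exact hit h
        · exact him ⟨j, hj.symm⟩
      exact absurd hiC
        (step1_no_base hg1 (hclv v) hdv hdkv hsqN hltnN hndv hblkv i hiB)
  · -- edge gadget
    obtain ⟨m1, f1, hg1⟩ := R.dome_e e he
    have hblke : ∀ x ∈ C, x ∈ Pe e → utilAvgEQ G (Pe e) x < utilAvgEQ G C x := by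
      intro x hxC hxP
      have h := hblks x hxC
      rwa [hΓe e he x hxP] at h
    have hbe : ∀ z ∈ domeBase (Pe e) (ep e) m1, z ∉ C :=
      step1_no_base hg1 (hcle e he) (le_refl 2) hdk2 hsqN hltnN hnd2 hblke
    by_cases hit : i = ep e
    · exact Or.inr (Or.inl ⟨e, he, hit⟩)
    by_cases him : ∃ j, i = m1 j
    · obtain ⟨j, hij⟩ := him
      exfalso
      exact step2_no_mid hg1 (hcle e he) (le_refl 2) hd12 hltnN (htope e he) hbe hblke j
        (hij ▸ hiC)
    · have hiB : i ∈ domeBase (Pe e) (ep e) m1 := by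
        simp only [domeBase, Finset.mem_sdiff, Finset.mem_insert, Finset.mem_image,
          Finset.mem_univ, true_and]
        refine ⟨hie, ?_⟩
        rintro (h | ⟨j, hj⟩)
        · exact hit h
        · exact him ⟨j, hj.symm⟩
      exact absurd hiC (hbe i hiB)
  · -- incidence gadget
    obtain ⟨m1, f1, hg1⟩ := R.dome_ve v e he hve
    have hblkb : ∀ x ∈ C, x ∈ Pve v e → utilAvgEQ G (Pve v e) x < utilAvgEQ G C x := by
      intro x hxC hxP
      have h := hblks x hxC
      rwa [hΓve v e he hve x hxP] at h
    have hbe : ∀ z ∈ domeBase (Pve v e) (bp v e) m1, z ∉ C :=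
      step1_no_base hg1 (hclve v e he hve) (le_refl 2) hdk2 hsqN hltnN hnd2 hblkb
    by_cases hit : i = bp v e
    · exact Or.inr (Or.inr (Or.inl ⟨v, e, he, hve, hit⟩))
    by_cases him : ∃ j, i = m1 j
    · obtain ⟨j, hij⟩ := him
      exfalso
      exact step2_no_mid hg1 (hclve v e he hve) (le_refl 2) hd12 hltnN (htopb v e he hve)
        hbe hblkb j (hij ▸ hiC)
    · have hiB : i ∈ domeBase (Pve v e) (bp v e) m1 := by
        simp only [domeBase, Finset.mem_sdiff, Finset.mem_insert, Finset.mem_image,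
          Finset.mem_univ, true_and]
        refine ⟨hie, ?_⟩
        rintro (h | ⟨j, hj⟩)
        · exact hit h
        · exact him ⟨j, hj.symm⟩
      exact absurd hiC (hbe i hiB)
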